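/- At θ = 0 (low loyalty), the symmetric equilibrium effort a*(0, n) = (1/n)·(ωβ/(nc))^(1/(1−β)) is strictly decreasing in team size n (treated as a real variable n ≥ 1). -/
import Mathlib


theorem zero_loyalty_effort_decreasing_in_team_size (ω c β : ℝ)
    (hω : 0 < ω) (hc : 0 < c) (hβ0 : 0 < β) (hβ1 : β < 1) :
    StrictAntiOn (fun n : ℝ => (1 / n) * (ω * β / (n * c)) ^ (1 / (1 - β)))
      (Set.Ici 1) := by
  intro x hx y hy hxy
  have hx0 : (0:ℝ) < x := lt_of_lt_of_le one_pos hx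
  have hy0 : (0:ℝ) < y := lt_of_lt_of_le one_pos hy
  have he : 0 < 1 / (1 - β) := div_pos one_pos (by linarith)
  have hnum : 0 < ω * β := by positivity
  have hbase_y : 0 < ω * β / (y * c) := by positivity
  have hbase_lt : ω * β / (y * c) < ω * β / (x * c) :=
    div_lt_div_of_pos_left hnum (by positivity) (by nlinarith)
  have hpow : (ω * β / (y * c)) ^ (1 / (1 - β)) < (ω * β / (x * c)) ^ (1 / (1 - β)) :=
    Real.rpow_lt_rpow (le_of_lt hbase_y) hbase_lt he
  have h1 : 1 / y < 1 / x := one_div_lt_one_div_of_lt hx0 hxy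
  have hpow_y : 0 < (ω * β / (y * c)) ^ (1 / (1 - β)) := Real.rpow_pos_of_pos hbase_y _
  calc (1 / y) * (ω * β / (y * c)) ^ (1 / (1 - β))
      < (1 / x) * (ω * β / (y * c)) ^ (1 / (1 - β)) := by
        exact mul_lt_mul_of_pos_right h1 hpow_y
    _ < (1 / x) * (ω * β / (x * c)) ^ (1 / (1 - β)) := by
        exact mul_lt_mul_of_pos_left hpow (by positivity)
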